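/- Let V be a finite-dimensional real vector space with inner product g, and let J₊, J₋ be g-orthogonal complex structures on V (J₊² = J₋² = -id, g(J±u, J±v) = g(u,v)). Set ω± = g∘J± (i.e. ω±(u,v) = g(J±u, v)). Define the generalized complex structure 𝕁₂ on V ⊕ V* by the Gualtieri map: 𝕁₂(X,ξ) = ((1/2)((-J₊+J₋)X + (ω₊⁻¹+ω₋⁻¹)ξ), (1/2)((-ω₊-ω₋)X + (J₊*-J₋*)ξ)). Then for X ∈ V, ξ, α ∈ V*, the equation 𝕁₂(X,ξ) = (0, α) holds if and only if J₊(X + g⁻¹ξ) = J₋(X - g⁻¹ξ) = -g⁻¹α. -/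

import Mathlib

/-- Pointwise linear-algebra content of Lemma 4.2: the moment map equation
`𝕁₂(X,ξ) = (0,α)` (with `𝕁₂` given by the Gualtieri map) is equivalent to
`J₊(X + g⁻¹ξ) = J₋(X - g⁻¹ξ) = -g⁻¹α`. -/
theorem stmt0
    {V : Type*} [NormedAddCommGroup V] [InnerProductSpace ℝ V] [FiniteDimensional ℝ V]
    (Jp Jm : V →ₗ[ℝ] V)
    (hJp2 : ∀ v, Jp (Jp v) = -v) (hJm2 : ∀ v, Jm (Jm v) = -v)
    (hJpO : ∀ u v : V, (inner ℝ (Jp u) (Jp v) : ℝ) = inner ℝ u v)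
    (hJmO : ∀ u v : V, (inner ℝ (Jm u) (Jm v) : ℝ) = inner ℝ u v)
    (sharp : Module.Dual ℝ V ≃ₗ[ℝ] V)
    (hsharp : ∀ (ξ : Module.Dual ℝ V) (v : V), ξ v = (inner ℝ (sharp ξ) v : ℝ))
    (ωp ωm : V →ₗ[ℝ] Module.Dual ℝ V)
    (hωp : ∀ u v, ωp u v = (inner ℝ (Jp u) v : ℝ))
    (hωm : ∀ u v, ωm u v = (inner ℝ (Jm u) v : ℝ))
    (ωpInv ωmInv : Module.Dual ℝ V →ₗ[ℝ] V)
    (hωpInv₁ : ∀ ξ, ωp (ωpInv ξ) = ξ) (hωpInv₂ : ∀ u, ωpInv (ωp u) = u)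
    (hωmInv₁ : ∀ ξ, ωm (ωmInv ξ) = ξ) (hωmInv₂ : ∀ u, ωmInv (ωm u) = u)
    (X : V) (ξ α : Module.Dual ℝ V) :
    ((1 / 2 : ℝ) • ((-(Jp X) + Jm X) + (ωpInv ξ + ωmInv ξ)) = 0 ∧
      (1 / 2 : ℝ) • ((-(ωp X) - ωm X) + (Jp.dualMap ξ - Jm.dualMap ξ)) = α)
    ↔ (Jp (X + sharp ξ) = Jm (X - sharp ξ) ∧ Jp (X + sharp ξ) = -(sharp α)) := by
  -- inner product of sharp ξ with Jp v
  have hip : ∀ (η : Module.Dual ℝ V) (v : V),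
      (inner ℝ (sharp η) (Jp v) : ℝ) = -(inner ℝ (Jp (sharp η)) v : ℝ) := by
    intro η v
    have := hJpO (sharp η) (Jp v)
    rw [hJp2] at this
    rw [← this, inner_neg_right]
  have him : ∀ (η : Module.Dual ℝ V) (v : V),
      (inner ℝ (sharp η) (Jm v) : ℝ) = -(inner ℝ (Jm (sharp η)) v : ℝ) := by
    intro η v
    have := hJmO (sharp η) (Jm v)
    rw [hJm2] at this
    rw [← this, inner_neg_right]
  -- formulas for the inverses
  have hInvP : ωpInv ξ = -(Jp (sharp ξ)) := by
    have h : ωp (-(Jp (sharp ξ))) = ξ := by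
      ext v
      rw [hωp, map_neg, hJp2, neg_neg, ← hsharp]
    have h2 := hωpInv₂ (-(Jp (sharp ξ)))
    rw [h] at h2
    exact h2
  have hInvM : ωmInv ξ = -(Jm (sharp ξ)) := by
    have h : ωm (-(Jm (sharp ξ))) = ξ := by
      ext v
      rw [hωm, map_neg, hJm2, neg_neg, ← hsharp]
    have h2 := hωmInv₂ (-(Jm (sharp ξ)))
    rw [h] at h2
    exact h2
  -- express the dual-space quantities through sharp.symm
  have hωpX : ωp X = sharp.symm (Jp X) := by
    ext v
    rw [hωp, hsharp (sharp.symm (Jp X)) v, LinearEquiv.apply_symm_apply]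
  have hωmX : ωm X = sharp.symm (Jm X) := by
    ext v
    rw [hωm, hsharp (sharp.symm (Jm X)) v, LinearEquiv.apply_symm_apply]
  have hdualP : Jp.dualMap ξ = sharp.symm (-(Jp (sharp ξ))) := by
    ext v
    rw [LinearMap.dualMap_apply, hsharp ξ (Jp v), hip,
      hsharp (sharp.symm (-(Jp (sharp ξ)))) v, LinearEquiv.apply_symm_apply,
      inner_neg_left]
  have hdualM : Jm.dualMap ξ = sharp.symm (-(Jm (sharp ξ))) := by
    ext v
    rw [LinearMap.dualMap_apply, hsharp ξ (Jm v), him,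
      hsharp (sharp.symm (-(Jm (sharp ξ)))) v, LinearEquiv.apply_symm_apply,
      inner_neg_left]
  rw [hInvP, hInvM, hωpX, hωmX, hdualP, hdualM]
  have hsecond :
      ((1 / 2 : ℝ) • ((-(sharp.symm (Jp X)) - sharp.symm (Jm X)) +
          (sharp.symm (-(Jp (sharp ξ))) - sharp.symm (-(Jm (sharp ξ))))) = α)
      ↔ ((1 / 2 : ℝ) • ((-(Jp X) - Jm X) + (-(Jp (sharp ξ)) - -(Jm (sharp ξ)))) = sharp α) := by
    have e : (-(sharp.symm (Jp X)) - sharp.symm (Jm X)) +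
        (sharp.symm (-(Jp (sharp ξ))) - sharp.symm (-(Jm (sharp ξ)))) =
        sharp.symm ((-(Jp X) - Jm X) + (-(Jp (sharp ξ)) - -(Jm (sharp ξ)))) := by
      simp only [map_add, map_sub, map_neg]
    rw [e, ← map_smul, LinearEquiv.symm_apply_eq]
  rw [hsecond]
  constructor
  · rintro ⟨h1, h2⟩
    have h1' : Jp X + Jp (sharp ξ) = Jm X - Jm (sharp ξ) := by
      linear_combination (norm := module) (-2 : ℝ) • h1
    refine ⟨by rw [map_add, map_sub]; exact h1', ?_⟩
    rw [map_add]
    linear_combination (norm := module) (1 / 2 : ℝ) • h1' - h2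
  · rintro ⟨h1, h2⟩
    rw [map_add, map_sub] at h1
    rw [map_add] at h2
    constructor
    · linear_combination (norm := module) (-(1 / 2 : ℝ)) • h1
    · linear_combination (norm := module) (1 / 2 : ℝ) • h1 - h2
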